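/- Let S ⊆ 𝔽₂^n be an affine subspace of dimension d. Then |S + B(t)| ≥ 2^d · binom(n − d, ≤ t), where B(t) is the Hamming ball of radius t around 0 and + denotes Minkowski sum. -/

import Mathlib

open Module Finset

variable {K : Type*} [Field K] {n : ℕ}

lemma span_proj_top (V : Submodule K (Fin n → K)) :
    Submodule.span K (Set.range fun i : Fin n =>
      ((LinearMap.proj i : (Fin n → K) →ₗ[K] K).comp V.subtype)) = ⊤ := by
  have hsurj : Function.Surjective (V.subtype.dualMap) :=
    V.subtype.dualMap_surjective_of_injective V.injective_subtype
  have hcoord : ∀ i : Fin n, (Pi.basisFun K (Fin n)).dualBasis i =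
      (LinearMap.proj i : (Fin n → K) →ₗ[K] K) := by
    intro i
    apply LinearMap.ext
    intro x
    simp [Basis.coe_dualBasis, Basis.coord_apply, Pi.basisFun_repr]
  have hb : Submodule.span K (Set.range fun i : Fin n =>
      (LinearMap.proj i : (Fin n → K) →ₗ[K] K)) = ⊤ := by
    have := (Pi.basisFun K (Fin n)).dualBasis.span_eq
    rwa [show ⇑(Pi.basisFun K (Fin n)).dualBasis = fun i : Fin n =>
      (LinearMap.proj i : (Fin n → K) →ₗ[K] K) from funext hcoord] at this
  have : (Set.range fun i : Fin n =>
      ((LinearMap.proj i : (Fin n → K) →ₗ[K] K).comp V.subtype)) =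
      V.subtype.dualMap '' (Set.range fun i : Fin n =>
      (LinearMap.proj i : (Fin n → K) →ₗ[K] K)) := by
    rw [← Set.range_comp]; rfl
  rw [this, ← Submodule.map_span, hb, Submodule.map_top, LinearMap.range_eq_top.mpr hsurj]

lemma exists_shatter (V : Submodule K (Fin n → K)) :
    ∃ I : Finset (Fin n), I.card = finrank K V ∧
      Function.Surjective (fun (v : V) (i : ↥I) => (v : Fin n → K) i) := by
  classical
  set f : Fin n → Module.Dual K V :=
    fun i => ((LinearMap.proj i : (Fin n → K) →ₗ[K] K).comp V.subtype) with hf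
  obtain ⟨b, hbsub, hbspan, hbind⟩ := exists_linearIndependent K (Set.range f)
  rw [span_proj_top] at hbspan
  have hbfin : b.Finite := (Set.finite_range f).subset hbsub
  haveI := hbfin.fintype
  have hB : Basis ↥b K (Module.Dual K V) :=
    Basis.mk hbind (by rw [Subtype.range_coe, hbspan])
  have hcard : Fintype.card ↥b = finrank K V := by
    rw [← finrank_eq_card_basis hB, Subspace.dual_finrank_eq]
  have hg : ∀ φ : ↥b, ∃ i : Fin n, f i = (φ : Module.Dual K V) := fun φ => hbsub φ.2
  choose g hgf using hg
  have hginj : Function.Injective g := by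
    intro φ ψ h
    have : (φ : Module.Dual K V) = ψ := by rw [← hgf φ, ← hgf ψ, h]
    exact Subtype.ext this
  refine ⟨Finset.univ.image g, ?_, ?_⟩
  · rw [Finset.card_image_of_injective _ hginj, Finset.card_univ, hcard]
  · set I : Finset (Fin n) := Finset.univ.image g with hI
    set Φ : V →ₗ[K] (↥I → K) := LinearMap.pi (fun i => f i.1) with hΦ
    have hinj : Function.Injective Φ := by
      rw [← LinearMap.ker_eq_bot, Submodule.eq_bot_iff]
      intro v hv
      have h1 : ∀ φ ∈ b, φ v = 0 := by
        intro φ hφ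
        have hgI : g ⟨φ, hφ⟩ ∈ I := by simp [hI]
        have := congrFun hv ⟨g ⟨φ, hφ⟩, hgI⟩
        simpa [hΦ, LinearMap.pi_apply, hgf ⟨φ, hφ⟩] using this
      have h2 : ∀ ψ : Module.Dual K V, ψ v = 0 := by
        intro ψ
        have hψ : ψ ∈ Submodule.span K b := by rw [hbspan]; trivial
        refine Submodule.span_induction h1 (by simp) ?_ ?_ hψ
        · intro x y _ _ hx hy; simp [LinearMap.add_apply, hx, hy]
        · intro c x _ hx; simp [LinearMap.smul_apply, hx]
      exact (Module.forall_dual_apply_eq_zero_iff K v).mp h2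
    have hrank : finrank K V = finrank K (↥I → K) := by
      rw [finrank_pi, Fintype.card_coe, hI,
        Finset.card_image_of_injective _ hginj, Finset.card_univ, hcard]
    have hsurj : Function.Surjective Φ :=
      (LinearMap.injective_iff_surjective_of_finrank_eq_finrank hrank).mp hinj
    exact hsurj

lemma zmod2_eq_one {x : ZMod 2} (h : x ≠ 0) : x = 1 := by revert h; revert x; decide

lemma card_lowweight {n : ℕ} (J : Finset (Fin n)) (t : ℕ) :
    (Finset.univ.filter fun e : Fin n → ZMod 2 =>
        (∀ i, i ∉ J → e i = 0) ∧ hammingNorm e ≤ t).card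
      = ∑ s ∈ Finset.range (t + 1), J.card.choose s := by
  classical
  have h1 : (J.powerset.filter fun T => T.card ≤ t)
      = (Finset.range (t + 1)).biUnion (fun s => Finset.powersetCard s J) := by
    ext T
    simp [Finset.mem_powersetCard, Nat.lt_succ_iff]
    tauto
  have h2 : (J.powerset.filter fun T => T.card ≤ t).card
      = ∑ s ∈ Finset.range (t + 1), J.card.choose s := by
    rw [h1, Finset.card_biUnion]
    · exact Finset.sum_congr rfl fun s _ => Finset.card_powersetCard s J
    · intro s _ s' _ hss
      apply Finset.disjoint_left.mpr
      intro T hT hT'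
      rw [Finset.mem_powersetCard] at hT hT'
      exact hss (hT.2 ▸ hT'.2 ▸ rfl)
  rw [← h2]
  apply Finset.card_bij (fun e _ => Finset.univ.filter fun i => e i ≠ 0)
  · intro e he
    rw [Finset.mem_filter] at he ⊢
    refine ⟨Finset.mem_powerset.mpr ?_, ?_⟩
    · intro i hi
      rw [Finset.mem_filter] at hi
      by_contra hiJ
      exact hi.2 (he.2.1 i hiJ)
    · exact he.2.2
  · intro e he e' he' h
    funext i
    by_cases hi : e i = 0
    · have : e' i = 0 := by
        by_contra hne
        have : i ∈ Finset.univ.filter fun j => e j ≠ 0 := by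
          rw [h]; simp [hne]
        simp [hi] at this
      rw [hi, this]
    · have : e' i ≠ 0 := by
        have : i ∈ Finset.univ.filter fun j => e' j ≠ 0 := by
          rw [← h]; simp [hi]
        simpa using this
      rw [zmod2_eq_one hi, zmod2_eq_one this]
  · intro T hT
    rw [Finset.mem_filter, Finset.mem_powerset] at hT
    refine ⟨fun i => if i ∈ T then 1 else 0, ?_, ?_⟩
    · rw [Finset.mem_filter]
      refine ⟨Finset.mem_univ _, fun i hi => by have hiT : i ∉ T := fun h => hi (hT.1 h); simp [hiT], ?_⟩
      have : hammingNorm (fun i => if i ∈ T then (1 : ZMod 2) else 0) = T.card := by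
        unfold hammingNorm
        congr 1
        ext i
        by_cases h : i ∈ T <;> simp [h]
      rw [this]; exact hT.2
    · ext i
      by_cases h : i ∈ T <;> simp [h]



/-- `|B(t)|`: the size of the Hamming ball of radius `t` in `𝔽₂^n`. -/
def ballCount (n t : ℕ) : ℕ := ∑ s ∈ Finset.range (t + 1), n.choose s

/-- If `S ⊆ 𝔽₂^n` is an affine subspace of dimension `d`, then the Minkowski sum
`S + B(t)` has size at least `2^d · binom(n − d, ≤ t)`. -/
theorem affine_subspace_ball_sum_lower
    (n d t : ℕ) (S : Set (Fin n → ZMod 2))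
    (hS : ∃ (u : Fin n → ZMod 2) (V : Submodule (ZMod 2) (Fin n → ZMod 2)),
      S = {w | ∃ v ∈ V, w = u + v} ∧ d = Module.finrank (ZMod 2) V) :
    2 ^ d * ballCount (n - d) t ≤
      Set.ncard {w : Fin n → ZMod 2 |
        ∃ a ∈ S, ∃ b : Fin n → ZMod 2, hammingNorm b ≤ t ∧ w = a + b} := by
  classical
  obtain ⟨u, V, hSeq, hd⟩ := hS
  obtain ⟨I, hIcard, hsurj⟩ := exists_shatter V
  rw [← hd] at hIcard
  have hdn : d ≤ n := by
    rw [hd]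
    have := Submodule.finrank_le V
    rwa [Module.finrank_pi, Fintype.card_fin] at this
  set J : Finset (Fin n) := Iᶜ with hJ
  have hJcard : J.card = n - d := by
    rw [hJ, Finset.card_compl, Fintype.card_fin, hIcard]
  set E : Finset (Fin n → ZMod 2) := Finset.univ.filter fun e =>
    (∀ i, i ∉ J → e i = 0) ∧ hammingNorm e ≤ t with hE
  have hEcard : E.card = ballCount (n - d) t := by
    rw [hE, card_lowweight, hJcard]; rfl
  choose vmap hvmap using hsurj
  set Tset : Set (Fin n → ZMod 2) := {w | ∃ a ∈ S, ∃ b : Fin n → ZMod 2,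
      hammingNorm b ≤ t ∧ w = a + b} with hT
  have hfin : Tset.Finite := Set.toFinite _
  rw [Set.ncard_eq_toFinset_card _ hfin]
  set F : Finset ((↥I → ZMod 2) × (Fin n → ZMod 2)) := Finset.univ ×ˢ E with hF
  have hFcard : F.card = 2 ^ d * ballCount (n - d) t := by
    rw [hF, Finset.card_product, hEcard, Finset.card_univ, Fintype.card_fun,
      ZMod.card, Fintype.card_coe, hIcard]
  rw [← hFcard]
  apply Finset.card_le_card_of_injOn
    (fun p => u + (vmap p.1 : Fin n → ZMod 2) + p.2)
  · rintro ⟨x, e⟩ hp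
    rw [Finset.mem_coe, hF, Finset.mem_product, hE, Finset.mem_filter] at hp
    rw [Finset.mem_coe, Set.Finite.mem_toFinset, hT]
    refine ⟨u + (vmap x : Fin n → ZMod 2), ?_, e, hp.2.2.2, by abel⟩
    rw [hSeq]
    exact ⟨vmap x, (vmap x).2, rfl⟩
  · rintro ⟨x, e⟩ hp ⟨y, e'⟩ hq h
    simp only at h
    rw [Finset.mem_coe, hF, Finset.mem_product, hE, Finset.mem_filter] at hp hq
    have h0 : (vmap x : Fin n → ZMod 2) + e = (vmap y : Fin n → ZMod 2) + e' := by
      have := h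
      rw [add_assoc, add_assoc] at this
      exact add_left_cancel this
    have hxy : x = y := by
      have hIeq : ∀ i : ↥I, (vmap x : Fin n → ZMod 2) i = (vmap y : Fin n → ZMod 2) i := by
        intro i
        have he : e (i : Fin n) = 0 := hp.2.2.1 (i : Fin n) (by simp [hJ, i.2])
        have he' : e' (i : Fin n) = 0 := hq.2.2.1 (i : Fin n) (by simp [hJ, i.2])
        have h2 := congrFun h0 (i : Fin n)
        rw [Pi.add_apply, Pi.add_apply, he, he'] at h2
        simpa using h2
      rw [← hvmap x, ← hvmap y]
      funext i
      exact hIeq i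
    have hee : e = e' := by
      rw [hxy] at h0
      exact add_left_cancel h0
    rw [Prod.ext_iff]
    exact ⟨hxy, hee⟩
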